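/- Let p be a natural number, c > 0, q > 0, x0 ≥ 0. Let f : ℝ → ℝ be a measurable probability density supported on [x0, ∞) (f ≥ 0 and ∫_{x0}^∞ f = 1) such that f·ln f is integrable on [x0, ∞), ∫_{x0}^∞ f(x)·ln((p+1)^(-1/q) + (x-x0)/c) dx = (1/q)·(H_{p+1} - ln(p+1)), and ∫_{x0}^∞ f(x)·ln(1 - (1 + (p+1)^(1/q)·(x-x0)/c)^(-q)) dx = -1/(p+1), where H_{p+1} = Σ_{k=1}^{p+1} 1/k. Then -∫_{x0}^∞ f(x)·ln(f(x)) dx ≤ -ln(q/c) + ((q+1)/q)·(H_{p+1} - ln(p+1)) + p/(p+1), i.e. the IF3 distribution maximizes differential entropy under these constraints. -/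

import Mathlib

open MeasureTheory Real Set Filter Topology

lemma if3_density_integral (p : ℕ) (c q x0 : ℝ) (hc : 0 < c) (hq : 0 < q) :
    IntegrableOn (fun x => q / c * (((p:ℝ)+1) ^ (-1/q) + (x - x0)/c) ^ (-q-1) *
      (1 - (1 + ((p:ℝ)+1) ^ (1/q) * ((x - x0)/c)) ^ (-q)) ^ p) (Set.Ioi x0) ∧
    ∫ x in Set.Ioi x0, q / c * (((p:ℝ)+1) ^ (-1/q) + (x - x0)/c) ^ (-q-1) *
      (1 - (1 + ((p:ℝ)+1) ^ (1/q) * ((x - x0)/c)) ^ (-q)) ^ p = 1 := by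
  have hP : (0:ℝ) < (p:ℝ) + 1 := by positivity
  set A : ℝ := ((p:ℝ)+1) ^ (-1/q) with hA
  set B : ℝ := ((p:ℝ)+1) ^ (1/q) with hB
  have hApos : 0 < A := rpow_pos_of_pos hP _
  have hBpos : 0 < B := rpow_pos_of_pos hP _
  have hAB : A * B = 1 := by
    rw [hA, hB, ← rpow_add hP, show -1/q + 1/q = (0:ℝ) by ring, rpow_zero]
  set g : ℝ → ℝ := fun x => q / c * (A + (x - x0)/c) ^ (-q-1) *
      (1 - (1 + B * ((x - x0)/c)) ^ (-q)) ^ p with hg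
  set F : ℝ → ℝ := fun x => (1 - (1 + B * ((x - x0)/c)) ^ (-q)) ^ (p+1) with hF
  have hu_pos : ∀ x ∈ Ici x0, (1:ℝ) ≤ 1 + B * ((x - x0)/c) := by
    intro x hx
    have h1 : 0 ≤ (x - x0)/c := div_nonneg (by simp at hx; linarith) hc.le
    nlinarith
  have hderiv : ∀ x ∈ Ici x0, HasDerivAt F (g x) x := by
    intro x hx
    have hu1 : (1:ℝ) ≤ 1 + B * ((x - x0)/c) := hu_pos x hx
    have hu0 : (0:ℝ) < 1 + B * ((x - x0)/c) := lt_of_lt_of_le one_pos hu1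
    have h1 : HasDerivAt (fun y => 1 + B * ((y - x0)/c)) (B / c) x := by
      have h0 : HasDerivAt (fun y => (y - x0)/c) (1/c) x :=
        ((hasDerivAt_id x).sub_const x0).div_const c
      simpa [mul_one_div, div_eq_mul_inv] using ((h0.const_mul B).const_add 1)
    have h2 := h1.rpow_const (p := -q) (Or.inl hu0.ne')
    have h3 : HasDerivAt (fun y => 1 - (1 + B * ((y - x0)/c)) ^ (-q))
        (q * (1 + B * ((x - x0)/c)) ^ (-q-1) * (B / c)) x := by
      exact (h2.const_sub 1).congr_deriv (by ring)
    have h4 := h3.pow (p+1)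
    refine (show HasDerivAt F _ x from h4).congr_deriv ?_
    have hx' : A + (x - x0)/c = A * (1 + B * ((x - x0)/c)) := by
      rw [mul_add, mul_one, ← mul_assoc, hAB, one_mul]
    have hAq : A ^ (-q-1) = ((p:ℝ)+1) * B := by
      rw [hA, hB, ← rpow_mul hP.le,
        show (-1/q)*(-q-1) = 1 + 1/q by field_simp; ring,
        rpow_add hP, rpow_one]
    simp only [hg]
    rw [hx', mul_rpow hApos.le hu0.le, hAq]
    push_cast
    ring
  have hgpos : ∀ x ∈ Ioi x0, 0 ≤ g x := by
    intro x hx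
    have hu1 : (1:ℝ) ≤ 1 + B * ((x - x0)/c) := hu_pos x (Ioi_subset_Ici_self hx)
    have hu0 : (0:ℝ) < 1 + B * ((x - x0)/c) := lt_of_lt_of_le one_pos hu1
    have hle : (1 + B * ((x - x0)/c)) ^ (-q) ≤ 1 :=
      rpow_le_one_of_one_le_of_nonpos hu1 (by linarith)
    have h1 : (0:ℝ) ≤ q / c := le_of_lt (by positivity)
    have h2 : (0:ℝ) ≤ (A + (x - x0)/c) ^ (-q-1) := (rpow_pos_of_pos (by
      have : 0 < (x - x0)/c := div_pos (by simp at hx; linarith) hc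
      linarith) _).le
    exact mul_nonneg (mul_nonneg h1 h2) (pow_nonneg (by linarith) p)
  have htend : Tendsto F atTop (𝓝 1) := by
    have h1 : Tendsto (fun x : ℝ => 1 + B * ((x - x0)/c)) atTop atTop := by
      apply tendsto_atTop_add_const_left
      apply Tendsto.const_mul_atTop hBpos
      apply Tendsto.atTop_div_const hc
      exact tendsto_atTop_add_const_right _ _ tendsto_id
    have h2 : Tendsto (fun x : ℝ => (1 + B * ((x - x0)/c)) ^ (-q)) atTop (𝓝 0) :=
      (tendsto_rpow_neg_atTop hq).comp h1
    have h3 : Tendsto (fun x : ℝ => 1 - (1 + B * ((x - x0)/c)) ^ (-q)) atTop (𝓝 1) := by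
      simpa using (tendsto_const_nhds (x := (1:ℝ))).sub h2
    have := h3.pow (p+1)
    simpa using this
  have hF0 : F x0 = 0 := by
    simp [hF, one_rpow]
  have hint := integrableOn_Ioi_deriv_of_nonneg' hderiv hgpos htend
  have hval := integral_Ioi_of_hasDerivAt_of_nonneg' hderiv hgpos htend
  rw [hF0, sub_zero] at hval
  exact ⟨hint, hval⟩

/-- The IF3 distribution maximizes the differential entropy among continuous
distributions supported on `[x0, ∞)` satisfying the two moment constraints. -/
theorem if3_max_entropy (p : ℕ) (c q x0 : ℝ) (hc : 0 < c) (hq : 0 < q)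
    (hx0 : 0 ≤ x0) (f : ℝ → ℝ)
    (hf_meas : Measurable f)
    (hf_nonneg : ∀ x, 0 ≤ f x)
    (hf_supp : ∀ x, x < x0 → f x = 0)
    (hf_prob : ∫ x in Set.Ioi x0, f x = 1)
    (hf_logint : IntegrableOn (fun x => f x * Real.log (f x)) (Set.Ioi x0))
    (hc1_int : IntegrableOn
      (fun x => f x * Real.log (((p : ℝ) + 1) ^ (-1 / q) + (x - x0) / c)) (Set.Ioi x0))
    (hc1 : ∫ x in Set.Ioi x0,
        f x * Real.log (((p : ℝ) + 1) ^ (-1 / q) + (x - x0) / c) =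
      1 / q * ((∑ k ∈ Finset.range (p + 1), (1 : ℝ) / (k + 1)) - Real.log ((p : ℝ) + 1)))
    (hc2_int : IntegrableOn
      (fun x => f x *
        Real.log (1 - (1 + ((p : ℝ) + 1) ^ (1 / q) * ((x - x0) / c)) ^ (-q)))
      (Set.Ioi x0))
    (hc2 : ∫ x in Set.Ioi x0,
        f x * Real.log (1 - (1 + ((p : ℝ) + 1) ^ (1 / q) * ((x - x0) / c)) ^ (-q)) =
      -(1 / ((p : ℝ) + 1))) :
    -∫ x in Set.Ioi x0, f x * Real.log (f x) ≤
      -Real.log (q / c) +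
        (q + 1) / q *
          ((∑ k ∈ Finset.range (p + 1), (1 : ℝ) / (k + 1)) - Real.log ((p : ℝ) + 1)) +
        (p : ℝ) / ((p : ℝ) + 1) := by
  have hP : (0:ℝ) < (p:ℝ) + 1 := by positivity
  obtain ⟨hg_int, hg_val⟩ := if3_density_integral p c q x0 hc hq
  set A : ℝ := ((p:ℝ)+1) ^ (-1/q) with hA
  set B : ℝ := ((p:ℝ)+1) ^ (1/q) with hB
  have hApos : 0 < A := rpow_pos_of_pos hP _
  have hBpos : 0 < B := rpow_pos_of_pos hP _
  set g : ℝ → ℝ := fun x => q / c * (A + (x - x0)/c) ^ (-q-1) *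
      (1 - (1 + B * ((x - x0)/c)) ^ (-q)) ^ p with hgdef
  set S : ℝ := (∑ k ∈ Finset.range (p + 1), (1 : ℝ) / (k + 1)) - Real.log ((p : ℝ) + 1)
    with hS
  -- positivity facts on Ioi x0
  have hfacts : ∀ x ∈ Ioi x0, 0 < A + (x - x0)/c ∧
      0 < 1 - (1 + B * ((x - x0)/c)) ^ (-q) := by
    intro x hx
    have ht : 0 < (x - x0)/c := div_pos (by simp only [mem_Ioi] at hx; linarith) hc
    constructor
    · linarith
    · have h1 : (1:ℝ) < 1 + B * ((x - x0)/c) := by nlinarith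
      have := rpow_lt_one_of_one_lt_of_neg h1 (by linarith : -q < 0)
      linarith
  have hgpos : ∀ x ∈ Ioi x0, 0 < g x := by
    intro x hx
    obtain ⟨h1, h2⟩ := hfacts x hx
    have : 0 < (A + (x - x0)/c) ^ (-q-1) := rpow_pos_of_pos h1 _
    simp only [hgdef]
    positivity
  have hfint : IntegrableOn f (Ioi x0) := by
    by_contra h
    rw [MeasureTheory.integral_undef h] at hf_prob
    norm_num at hf_prob
  -- log of g
  have hlog : ∀ x ∈ Ioi x0, Real.log (g x) =
      Real.log (q/c) + (-q-1) * Real.log (A + (x - x0)/c) +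
        (p:ℝ) * Real.log (1 - (1 + B * ((x - x0)/c)) ^ (-q)) := by
    intro x hx
    obtain ⟨h1, h2⟩ := hfacts x hx
    have hqc : (0:ℝ) < q / c := by positivity
    have hr : (0:ℝ) < (A + (x - x0)/c) ^ (-q-1) := rpow_pos_of_pos h1 _
    have hw : (0:ℝ) < (1 - (1 + B * ((x - x0)/c)) ^ (-q)) ^ p := pow_pos h2 p
    simp only [hgdef]
    rw [Real.log_mul (by positivity) hw.ne', Real.log_mul hqc.ne' hr.ne',
      Real.log_rpow h1, Real.log_pow]
  set φ : ℝ → ℝ := fun x => f x * Real.log (g x) with hφ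
  have hcomb : EqOn φ (fun x => Real.log (q/c) * f x +
      (-q-1) * (f x * Real.log (A + (x - x0)/c)) +
      (p:ℝ) * (f x * Real.log (1 - (1 + B * ((x - x0)/c)) ^ (-q)))) (Ioi x0) := by
    intro x hx
    simp only [hφ]
    rw [hlog x hx]
    ring
  have i1 : IntegrableOn (fun x => Real.log (q/c) * f x) (Ioi x0) := hfint.const_mul _
  have i2 : IntegrableOn (fun x => (-q-1) * (f x * Real.log (A + (x - x0)/c))) (Ioi x0) :=
    hc1_int.const_mul _
  have i3 : IntegrableOn
      (fun x => (p:ℝ) * (f x * Real.log (1 - (1 + B * ((x - x0)/c)) ^ (-q)))) (Ioi x0) :=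
    hc2_int.const_mul _
  have i12 : IntegrableOn (fun x => Real.log (q/c) * f x +
      (-q-1) * (f x * Real.log (A + (x - x0)/c))) (Ioi x0) := i1.add i2
  have hφint : IntegrableOn φ (Ioi x0) := by
    refine IntegrableOn.congr_fun ?_ hcomb.symm measurableSet_Ioi
    exact i12.add i3
  have hφval : ∫ x in Ioi x0, φ x =
      Real.log (q/c) + (-q-1) * (1/q * S) + (p:ℝ) * (-(1/((p:ℝ)+1))) := by
    rw [setIntegral_congr_fun measurableSet_Ioi hcomb]
    rw [integral_add i12 i3, integral_add i1 i2,
      integral_const_mul, integral_const_mul, integral_const_mul,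
      hf_prob, hc1, hc2]
    ring
  -- pointwise Gibbs inequality
  have hpt : ∀ x ∈ Ioi x0, φ x + (f x - g x) ≤ f x * Real.log (f x) := by
    intro x hx
    have hgx := hgpos x hx
    rcases (hf_nonneg x).eq_or_lt with hf0 | hfx
    · have h0 : φ x + (f x - g x) = -g x := by simp [hφ, ← hf0]
      have h1 : f x * Real.log (f x) = 0 := by rw [← hf0]; simp
      rw [h0, h1]; linarith
    · have hlog1 := Real.log_le_sub_one_of_pos (div_pos hgx hfx)
      rw [Real.log_div hgx.ne' hfx.ne'] at hlog1
      have h2 : f x * (Real.log (g x) - Real.log (f x)) ≤ f x * (g x / f x - 1) :=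
        mul_le_mul_of_nonneg_left hlog1 hfx.le
      have h3 : f x * (g x / f x - 1) = g x - f x := by field_simp
      have h4 : f x * Real.log (g x) - f x * Real.log (f x) =
        f x * (Real.log (g x) - Real.log (f x)) := by ring
      simp only [hφ]
      linarith
  have ifg : IntegrableOn (fun x => f x - g x) (Ioi x0) := hfint.sub hg_int
  have isum : IntegrableOn (fun x => φ x + (f x - g x)) (Ioi x0) := hφint.add ifg
  have hineq : ∫ x in Ioi x0, (φ x + (f x - g x)) ≤ ∫ x in Ioi x0, f x * Real.log (f x) :=
    setIntegral_mono_on isum hf_logint measurableSet_Ioi hpt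
  have hsplit : ∫ x in Ioi x0, (φ x + (f x - g x)) = ∫ x in Ioi x0, φ x := by
    rw [integral_add hφint ifg, integral_sub hfint hg_int, hf_prob, hg_val]
    simp
  rw [hsplit] at hineq
  rw [hφval] at hineq
  have hkey : (-q-1) * (1/q * S) = -((q+1)/q * S) := by
    field_simp
    ring
  have hp2 : (p:ℝ) * (-(1/((p:ℝ)+1))) = -((p:ℝ)/((p:ℝ)+1)) := by
    field_simp
  rw [hkey, hp2] at hineq
  linarith
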